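/- For c > 1, the integral 2π∫₀^∞ log(1 + r²/c) · r/(1+r²)² dr equals π (log c)/(c − 1). -/

import Mathlib

open MeasureTheory Filter Real Set Asymptotics

theorem radial_log_integral (c : ℝ) (hc : 1 < c) :
    2 * Real.pi * ∫ r in Set.Ioi (0 : ℝ),
        Real.log (1 + r ^ 2 / c) * (r / (1 + r ^ 2) ^ 2) =
      Real.pi * Real.log c / (c - 1) := by
  have hc0 : (0:ℝ) < c := lt_trans one_pos hc
  have hc1 : c - 1 ≠ 0 := by nlinarith
  set F : ℝ → ℝ := fun r =>
    -(Real.log (1 + r^2/c)/(2*(1+r^2))) + (Real.log (1+r^2) - Real.log (c+r^2))/(2*(c-1)) with hF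
  have hder : ∀ r ∈ Set.Ici (0:ℝ),
      HasDerivAt F (Real.log (1 + r ^ 2 / c) * (r / (1 + r ^ 2) ^ 2)) r := by
    intro r _
    have h1p : (0:ℝ) < 1 + r^2 := by positivity
    have h2p : (0:ℝ) < c + r^2 := by positivity
    have h3p : (0:ℝ) < 1 + r^2/c := by positivity
    have hsq : HasDerivAt (fun x : ℝ => x^2) (2*r) r := by simpa using hasDerivAt_pow 2 r
    have hA : HasDerivAt (fun x : ℝ => 1 + x^2/c) (2*r/c) r := (hsq.div_const c).const_add 1
    have hlogA : HasDerivAt (fun x : ℝ => Real.log (1 + x^2/c)) (2*r/c / (1+r^2/c)) r :=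
      hA.log h3p.ne'
    have hB : HasDerivAt (fun x : ℝ => 2*(1+x^2)) (2*(2*r)) r := (hsq.const_add 1).const_mul 2
    have hterm1 : HasDerivAt (fun x : ℝ => Real.log (1+x^2/c)/(2*(1+x^2)))
        ((2*r/c/(1+r^2/c) * (2*(1+r^2)) - Real.log (1+r^2/c) * (2*(2*r)))/(2*(1+r^2))^2) r :=
      hlogA.div hB (by positivity)
    have hlog1 : HasDerivAt (fun x : ℝ => Real.log (1+x^2)) (2*r/(1+r^2)) r :=
      ((hsq.const_add 1).log h1p.ne')
    have hlogc : HasDerivAt (fun x : ℝ => Real.log (c+x^2)) (2*r/(c+r^2)) r :=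
      ((hsq.const_add c).log h2p.ne')
    have hcomb := (hterm1.neg).add ((hlog1.sub hlogc).div_const (2*(c-1)))
    convert hcomb using 1
    case e'_4 => rfl
    case e'_5 => rfl
    case e'_8 => rfl
    have : 1 + r^2/c = (c + r^2)/c := by field_simp
    rw [this, Real.log_div h2p.ne' hc0.ne']
    field_simp
    ring
  have hpos : ∀ r ∈ Set.Ioi (0:ℝ), 0 ≤ Real.log (1 + r ^ 2 / c) * (r / (1 + r ^ 2) ^ 2) := by
    intro r hr
    have h1 : (0:ℝ) ≤ Real.log (1 + r^2/c) :=
      Real.log_nonneg (le_add_of_nonneg_right (by positivity))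
    have h2 : (0:ℝ) ≤ r / (1 + r^2)^2 := div_nonneg (le_of_lt hr) (by positivity)
    exact mul_nonneg h1 h2
  -- limit at infinity
  have htop : Tendsto (fun r : ℝ => c + r^2) atTop atTop := by
    apply tendsto_atTop_add_const_left
    exact tendsto_pow_atTop two_ne_zero
  have hlo : (fun r : ℝ => Real.log (c + r^2)) =o[atTop] (fun r => c + r^2) :=
    Real.isLittleO_log_id_atTop.comp_tendsto htop
  have hbo : (fun r : ℝ => c + r^2) =O[atTop] (fun r : ℝ => 1 + r^2) := by
    rw [Asymptotics.isBigO_iff]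
    refine ⟨c, Filter.Eventually.of_forall fun r => ?_⟩
    have h1 : (0:ℝ) < 1 + r^2 := by positivity
    have h2 : (0:ℝ) < c + r^2 := by positivity
    simp only [Real.norm_eq_abs, abs_of_pos h2, abs_of_pos h1]
    nlinarith [sq_nonneg r]
  have hdiv : Tendsto (fun r : ℝ => Real.log (c + r^2) / (1 + r^2)) atTop (nhds 0) :=
    (hlo.trans_isBigO hbo).tendsto_div_nhds_zero
  have hdiv1 : Tendsto (fun r : ℝ => Real.log (1 + r^2) / (1 + r^2)) atTop (nhds 0) := by
    have htop1 : Tendsto (fun r : ℝ => (1:ℝ) + r^2) atTop atTop := by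
      apply tendsto_atTop_add_const_left
      exact tendsto_pow_atTop two_ne_zero
    exact (Real.isLittleO_log_id_atTop.comp_tendsto htop1).tendsto_div_nhds_zero
  have hconst : Tendsto (fun r : ℝ => Real.log c / (1 + r^2)) atTop (nhds 0) := by
    apply Tendsto.div_atTop tendsto_const_nhds
    apply tendsto_atTop_add_const_left
    exact tendsto_pow_atTop two_ne_zero
  have hratio : Tendsto (fun r : ℝ => (c-1) / (c + r^2)) atTop (nhds 0) :=
    Tendsto.div_atTop tendsto_const_nhds htop
  have hr1 : Tendsto (fun r : ℝ => (1+r^2)/(c+r^2)) atTop (nhds 1) := by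
    have heq : ∀ r : ℝ, (1+r^2)/(c+r^2) = 1 - (c-1)/(c+r^2) := by
      intro r
      have h2p : (0:ℝ) < c + r^2 := by positivity
      field_simp
      ring
    simp only [heq]
    simpa using (tendsto_const_nhds (x := (1:ℝ))).sub hratio
  have hterm1 : Tendsto (fun r : ℝ => Real.log (1 + r^2/c)/(2*(1+r^2))) atTop (nhds 0) := by
    have heq : ∀ r : ℝ, Real.log (1+r^2/c)/(2*(1+r^2))
        = (Real.log (c+r^2)/(1+r^2) - Real.log c/(1+r^2))/2 := by
      intro r
      have h1p : (0:ℝ) < 1 + r^2 := by positivity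
      have h2p : (0:ℝ) < c + r^2 := by positivity
      rw [show (1:ℝ)+r^2/c = (c+r^2)/c from by field_simp, Real.log_div h2p.ne' hc0.ne',
        ← sub_div, div_div, mul_comm (2:ℝ) (1+r^2)]
    simp only [heq]
    simpa using (hdiv.sub hconst).div_const 2
  have hterm2 : Tendsto (fun r : ℝ => (Real.log (1+r^2) - Real.log (c+r^2))/(2*(c-1)))
      atTop (nhds 0) := by
    have heq : ∀ r : ℝ, Real.log (1+r^2) - Real.log (c+r^2) = Real.log ((1+r^2)/(c+r^2)) := by
      intro r
      exact (Real.log_div (by positivity) (by positivity)).symm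
    simp only [heq]
    have h := ((Real.continuousAt_log one_ne_zero).tendsto.comp hr1)
    simp only [Real.log_one] at h
    simpa using h.div_const (2*(c-1))
  have hlim : Tendsto F atTop (nhds 0) := by
    simp only [hF]
    simpa using hterm1.neg.add hterm2
  have key := integral_Ioi_of_hasDerivAt_of_nonneg' hder hpos hlim
  rw [key]
  have hF0 : F 0 = -(Real.log c)/(2*(c-1)) := by
    simp [hF, Real.log_one]
  rw [hF0]
  field_simp
  ring
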